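/- Let m ≥ 1, r ≥ 1, and k : Fin m → ℕ with 2r+1 ≤ k(i) for all i. In the m-dimensional r-nearest neighbor torus (the m-fold box product of the cycles C_{k(i)}^r), the vector v(x) = exp(2πi·x(1)/k(1)) is an eigenvector of the Laplacian matrix with eigenvalue 2r + 1 − sin((2r+1)π/k(1))/sin(π/k(1)); in particular this eigenvalue does not depend on the dimension m. -/

import Mathlib

open Real Complex SimpleGraph Matrix Finset

/-- The `r`-nearest neighbor cycle `C_n^r` on `ZMod n`: distinct vertices `a, b` are adjacent
iff `a - b ≡ s (mod n)` for some `s ∈ {1,…,r} ∪ {n-r,…,n-1}`, i.e. iff `a - b = s` or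
`b - a = s` in `ZMod n` for some `1 ≤ s ≤ r`. -/
def nnCycle (n r : ℕ) : SimpleGraph (ZMod n) where
  Adj a b := a ≠ b ∧ ∃ s ∈ Finset.Icc 1 r, a - b = (s : ZMod n) ∨ b - a = (s : ZMod n)
  symm := by
    constructor
    rintro a b ⟨hne, s, hs, h⟩
    exact ⟨hne.symm, s, hs, h.symm⟩
  loopless := by constructor; rintro a ⟨h, -⟩; exact h rfl

instance nnCycle.adjDecidable (n r : ℕ) : DecidableRel (nnCycle n r).Adj := fun a b =>
  inferInstanceAs (Decidable (a ≠ b ∧ ∃ s ∈ Finset.Icc 1 r,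
    a - b = (s : ZMod n) ∨ b - a = (s : ZMod n)))

/-- The `m`-dimensional `r`-nearest neighbor torus: the `m`-fold Cartesian (box) product of
the cycles `C_{k i}^r`. Two tuples are adjacent iff they agree in all but one coordinate and
differ in that coordinate by an edge of the corresponding cycle. -/
def nnTorus (m r : ℕ) (k : Fin m → ℕ) : SimpleGraph ((i : Fin m) → ZMod (k i)) where
  Adj x y := ∃ i, (∀ l, l ≠ i → x l = y l) ∧ (nnCycle (k i) r).Adj (x i) (y i)
  symm := by
    constructor
    rintro x y ⟨i, h1, h2⟩
    exact ⟨i, fun l hl => (h1 l hl).symm, h2.symm⟩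
  loopless := by
    constructor
    rintro x ⟨i, -, h2⟩
    exact h2.ne rfl

instance nnTorus.adjDecidable (m r : ℕ) (k : Fin m → ℕ) :
    DecidableRel (nnTorus m r k).Adj := fun x y =>
  inferInstanceAs (Decidable (∃ i, (∀ l, l ≠ i → x l = y l) ∧
    (nnCycle (k i) r).Adj (x i) (y i)))

noncomputable def evec (n : ℕ) (a : ZMod n) : ℂ :=
  Complex.exp (2 * Real.pi * Complex.I * a.val / n)

lemma evec_eq_pow (n : ℕ) (a : ZMod n) :
    evec n a = Complex.exp (2 * Real.pi * Complex.I / n) ^ a.val := by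
  rw [evec, ← Complex.exp_nat_mul]
  congr 1
  ring

lemma zeta_pow_n (n : ℕ) (hn : n ≠ 0) :
    Complex.exp (2 * Real.pi * Complex.I / n) ^ n = 1 := by
  rw [← Complex.exp_nat_mul,
    show (n : ℂ) * (2 * Real.pi * Complex.I / n) = 2 * Real.pi * Complex.I by
      have : (n : ℂ) ≠ 0 := Nat.cast_ne_zero.mpr hn
      field_simp]
  exact Complex.exp_two_pi_mul_I

lemma zeta_pow_mod (n x : ℕ) (hn : n ≠ 0) :
    Complex.exp (2 * Real.pi * Complex.I / n) ^ (x % n) =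
      Complex.exp (2 * Real.pi * Complex.I / n) ^ x := by
  conv_rhs => rw [← Nat.div_add_mod x n]
  rw [pow_add, pow_mul, zeta_pow_n n hn, one_pow, one_mul]

lemma evec_add (n : ℕ) [NeZero n] (a b : ZMod n) :
    evec n (a + b) = evec n a * evec n b := by
  rw [evec_eq_pow, evec_eq_pow, evec_eq_pow, ← pow_add, ZMod.val_add,
    zeta_pow_mod n _ (NeZero.ne n)]

lemma evec_add_neg (n : ℕ) [NeZero n] (a : ZMod n) :
    evec n a + evec n (-a) = 2 * (Real.cos (2 * Real.pi * a.val / n) : ℂ) := by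
  rcases eq_or_ne a 0 with rfl | ha
  · norm_num [evec]
  · have hle : a.val ≤ n := (ZMod.val_lt a).le
    have hneg : (-a).val = n - a.val := by rw [ZMod.neg_val, if_neg ha]
    have h1 : evec n a = Complex.exp ((2 * Real.pi * a.val / n : ℝ) * Complex.I) := by
      rw [evec]; congr 1; push_cast; ring
    have h2 : evec n (-a) =
        Complex.exp ((-(2 * Real.pi * a.val / n) : ℝ) * Complex.I + 2 * Real.pi * Complex.I) := by
      rw [evec, hneg]
      congr 1
      have : (n : ℂ) ≠ 0 := Nat.cast_ne_zero.mpr (NeZero.ne n)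
      push_cast [Nat.cast_sub hle]
      field_simp
      ring
    rw [h1, h2, Complex.exp_add, Complex.exp_two_pi_mul_I, mul_one,
      Complex.exp_mul_I, Complex.exp_mul_I]
    push_cast
    rw [Complex.cos_neg, Complex.sin_neg]
    ring

lemma natCast_zmod_inj {n s t : ℕ} (hs : s < n) (ht : t < n) (h : (s : ZMod n) = t) : s = t := by
  have := congrArg ZMod.val h
  rwa [ZMod.val_cast_of_lt hs, ZMod.val_cast_of_lt ht] at this

lemma cycle_nbhd (n r : ℕ) [NeZero n] (h : 2 * r + 1 ≤ n) (a : ZMod n) :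
    (nnCycle n r).neighborFinset a =
      ((Finset.Icc 1 r).image fun s : ℕ => a + s) ∪
        ((Finset.Icc 1 r).image fun s : ℕ => a - s) := by
  ext b
  simp only [mem_neighborFinset, Finset.mem_union, Finset.mem_image]
  constructor
  · rintro ⟨hne, s, hs, h1 | h1⟩
    · exact Or.inr ⟨s, hs, by rw [← h1]; ring⟩
    · exact Or.inl ⟨s, hs, by rw [← h1]; ring⟩
  · have key : ∀ s ∈ Finset.Icc 1 r, (s : ZMod n) ≠ 0 := by
      intro s hs h0
      rw [Finset.mem_Icc] at hs
      have : s = 0 := by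
        have := congrArg ZMod.val h0
        rwa [ZMod.val_cast_of_lt (by omega), ZMod.val_zero] at this
      omega
    rintro (⟨s, hs, rfl⟩ | ⟨s, hs, rfl⟩)
    · have hne : a ≠ a + (s : ZMod n) := by
        intro hab
        exact key s hs (by linear_combination -hab)
      exact ⟨hne, s, hs, Or.inr (by ring)⟩
    · have hne : a ≠ a - (s : ZMod n) := by
        intro hab
        exact key s hs (by linear_combination hab)
      exact ⟨hne, s, hs, Or.inl (by ring)⟩

lemma cycle_disj (n r : ℕ) (h : 2 * r + 1 ≤ n) (a : ZMod n) :
    Disjoint ((Finset.Icc 1 r).image fun s : ℕ => a + s)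
      ((Finset.Icc 1 r).image fun s : ℕ => a - s) := by
  rw [Finset.disjoint_left]
  rintro b hb1 hb2
  simp only [Finset.mem_image] at hb1 hb2
  obtain ⟨s, hs, rfl⟩ := hb1
  obtain ⟨t, ht, hst⟩ := hb2
  rw [Finset.mem_Icc] at hs ht
  have h0 : ((s + t : ℕ) : ZMod n) = 0 := by push_cast; linear_combination -hst
  rw [ZMod.natCast_eq_zero_iff] at h0
  have := Nat.le_of_dvd (by omega) h0
  omega

lemma cycle_inj_add (n r : ℕ) (h : 2 * r + 1 ≤ n) (a : ZMod n) :
    ∀ s ∈ Finset.Icc 1 r, ∀ t ∈ Finset.Icc 1 r, a + (s : ZMod n) = a + t → s = t := by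
  intro s hs t ht hst
  rw [Finset.mem_Icc] at hs ht
  exact natCast_zmod_inj (n := n) (by omega) (by omega) (by linear_combination hst)

lemma cycle_inj_sub (n r : ℕ) (h : 2 * r + 1 ≤ n) (a : ZMod n) :
    ∀ s ∈ Finset.Icc 1 r, ∀ t ∈ Finset.Icc 1 r, a - (s : ZMod n) = a - t → s = t := by
  intro s hs t ht hst
  rw [Finset.mem_Icc] at hs ht
  exact natCast_zmod_inj (n := n) (by omega) (by omega) (by linear_combination -hst)

lemma cycle_sum (n r : ℕ) [NeZero n] (h : 2 * r + 1 ≤ n) (a : ZMod n) (f : ZMod n → ℂ) :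
    ∑ b ∈ (nnCycle n r).neighborFinset a, f b
      = ∑ s ∈ Finset.Icc 1 r, (f (a + (s : ZMod n)) + f (a - (s : ZMod n))) := by
  rw [cycle_nbhd n r h a, Finset.sum_union (cycle_disj n r h a),
    Finset.sum_image (cycle_inj_add n r h a), Finset.sum_image (cycle_inj_sub n r h a),
    ← Finset.sum_add_distrib]

lemma cycle_degree (n r : ℕ) [NeZero n] (h : 2 * r + 1 ≤ n) (a : ZMod n) :
    (nnCycle n r).degree a = 2 * r := by
  rw [degree, cycle_nbhd n r h a,
    Finset.card_union_of_disjoint (cycle_disj n r h a),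
    Finset.card_image_of_injOn (cycle_inj_add n r h a),
    Finset.card_image_of_injOn (cycle_inj_sub n r h a), Nat.card_Icc]
  omega

section torus

variable {m r : ℕ} {k : Fin m → ℕ} [∀ i, NeZero (k i)]

lemma torus_nbhd (x : (i : Fin m) → ZMod (k i)) :
    (nnTorus m r k).neighborFinset x =
      Finset.univ.biUnion fun i =>
        ((nnCycle (k i) r).neighborFinset (x i)).image fun c => Function.update x i c := by
  ext y
  simp only [mem_neighborFinset, Finset.mem_biUnion, Finset.mem_univ, true_and,
    Finset.mem_image]
  constructor
  · rintro ⟨i, h1, h2⟩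
    refine ⟨i, y i, h2, ?_⟩
    funext l
    rcases eq_or_ne l i with rfl | hl
    · simp
    · simp [Function.update_of_ne hl, h1 l hl]
  · rintro ⟨i, c, hc, rfl⟩
    refine ⟨i, fun l hl => (Function.update_of_ne hl c x).symm, ?_⟩
    simpa using hc

lemma torus_disj (x : (i : Fin m) → ZMod (k i)) :
    Set.PairwiseDisjoint (Finset.univ : Finset (Fin m)) fun i =>
      ((nnCycle (k i) r).neighborFinset (x i)).image fun c => Function.update x i c := by
  intro i _ j _ hij
  rw [Function.onFun, Finset.disjoint_left]
  rintro z hz1 hz2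
  simp only [Finset.mem_image] at hz1 hz2
  obtain ⟨c, hc, rfl⟩ := hz1
  obtain ⟨c', hc', he⟩ := hz2
  rw [mem_neighborFinset] at hc
  have : Function.update x j c' i = x i := Function.update_of_ne hij c' x
  rw [he] at this
  simp at this
  exact hc.ne this.symm

lemma update_inj (x : (i : Fin m) → ZMod (k i)) (i : Fin m) :
    ∀ c ∈ (nnCycle (k i) r).neighborFinset (x i),
      ∀ c' ∈ (nnCycle (k i) r).neighborFinset (x i),
        Function.update x i c = Function.update x i c' → c = c' := by
  intro c _ c' _ h
  have := congrFun h i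
  simpa using this

lemma torus_sum (x : (i : Fin m) → ZMod (k i)) (f : ((i : Fin m) → ZMod (k i)) → ℂ) :
    ∑ y ∈ (nnTorus m r k).neighborFinset x, f y =
      ∑ i : Fin m, ∑ c ∈ (nnCycle (k i) r).neighborFinset (x i), f (Function.update x i c) := by
  rw [torus_nbhd x, Finset.sum_biUnion (torus_disj x)]
  exact Finset.sum_congr rfl fun i _ => Finset.sum_image (update_inj x i)

lemma torus_degree (hk : ∀ i, 2 * r + 1 ≤ k i) (x : (i : Fin m) → ZMod (k i)) :
    (nnTorus m r k).degree x = m * (2 * r) := by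
  rw [degree, torus_nbhd x, Finset.card_biUnion]
  · rw [Finset.sum_congr rfl fun i _ => ?_]
    · rw [Finset.sum_const, Finset.card_univ, Fintype.card_fin, smul_eq_mul]
    · rw [Finset.card_image_of_injOn (update_inj x i), ← degree, cycle_degree _ _ (hk i)]
  · exact fun i _ j _ hij => torus_disj x (Finset.mem_univ i) (Finset.mem_univ j) hij

end torus

lemma trig_sum (θ : ℝ) (r : ℕ) :
    Real.sin ((2 * r + 1) * θ) =
      Real.sin θ * (1 + ∑ s ∈ Finset.Icc 1 r, 2 * Real.cos (2 * s * θ)) := by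
  induction r with
  | zero => norm_num
  | succ n ih =>
    rw [Finset.sum_Icc_succ_top (Nat.le_add_left 1 n)]
    have key : Real.sin ((2 * ((n : ℝ) + 1) + 1) * θ) =
        Real.sin ((2 * (n : ℝ) + 1) * θ) + 2 * Real.cos (2 * ((n : ℝ) + 1) * θ) * Real.sin θ := by
      have h1 : (2 * ((n : ℝ) + 1) + 1) * θ = 2 * ((n : ℝ) + 1) * θ + θ := by ring
      have h2 : (2 * (n : ℝ) + 1) * θ = 2 * ((n : ℝ) + 1) * θ - θ := by ring
      rw [h1, h2, Real.sin_add, Real.sin_sub]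
      ring
    push_cast
    rw [key, ih]
    ring

lemma main_aux (m r : ℕ) (hm : 1 ≤ m) (hr : 1 ≤ r) (k : Fin m → ℕ)
    (hk : ∀ i, 2 * r + 1 ≤ k i) [∀ i, NeZero (k i)] :
    (nnTorus m r k).lapMatrix ℂ *ᵥ (fun x => evec (k ⟨0, hm⟩) (x ⟨0, hm⟩)) =
      ((2 * r + 1 - Real.sin ((2 * r + 1) * Real.pi / k ⟨0, hm⟩) /
          Real.sin (Real.pi / k ⟨0, hm⟩) : ℝ) : ℂ) •
        fun x => evec (k ⟨0, hm⟩) (x ⟨0, hm⟩) := by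
  set i0 : Fin m := ⟨0, hm⟩ with hi0
  set n := k i0 with hn
  have hrn : 2 * r + 1 ≤ n := hk i0
  have hnpos : (0 : ℝ) < n := by exact_mod_cast Nat.pos_of_ne_zero (by omega)
  have hsin : Real.sin (Real.pi / n) ≠ 0 := by
    have h1 : 0 < Real.pi / n := div_pos Real.pi_pos hnpos
    have h2 : Real.pi / n < Real.pi :=
      div_lt_self Real.pi_pos (by exact_mod_cast (by omega : 1 < n))
    exact (Real.sin_pos_of_pos_of_lt_pi h1 h2).ne'
  have hlam : (2 * r + 1 - Real.sin ((2 * r + 1) * Real.pi / n) / Real.sin (Real.pi / n) : ℝ)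
      = 2 * r - ∑ s ∈ Finset.Icc 1 r, 2 * Real.cos (2 * Real.pi * s / n) := by
    have hc : ∀ s ∈ Finset.Icc 1 r,
        2 * Real.cos (2 * (s : ℝ) * (Real.pi / n)) = 2 * Real.cos (2 * Real.pi * s / n) :=
      fun s _ => by rw [show 2 * (s : ℝ) * (Real.pi / n) = 2 * Real.pi * s / n by ring]
    rw [show (2 * (r : ℝ) + 1) * Real.pi / n = (2 * (r : ℝ) + 1) * (Real.pi / n) by ring,
      trig_sum (Real.pi / n) r, mul_div_cancel_left₀ _ hsin, Finset.sum_congr rfl hc]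
    ring
  funext x
  have hcard : ∀ i, ((nnCycle (k i) r).neighborFinset (x i)).card = 2 * r :=
    fun i => cycle_degree (k i) r (hk i) (x i)
  rw [Pi.smul_apply, smul_eq_mul, lapMatrix_mulVec_apply, torus_degree hk x,
    torus_sum x fun y => evec n (y i0)]
  have hbig : ∑ i : Fin m, ∑ c ∈ (nnCycle (k i) r).neighborFinset (x i),
      evec n (Function.update x i c i0)
      = (((m - 1) * (2 * r) : ℕ) : ℂ) * evec n (x i0)
        + evec n (x i0) * ∑ s ∈ Finset.Icc 1 r, (2 * (Real.cos (2 * Real.pi * s / n) : ℂ)) := by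
    rw [Finset.sum_eq_sum_sdiff_singleton_add (Finset.mem_univ i0)]
    refine congrArg₂ (· + ·) ?_ ?_
    · have h1 : ∀ i ∈ Finset.univ \ {i0},
          (∑ c ∈ (nnCycle (k i) r).neighborFinset (x i), evec n (Function.update x i c i0))
            = ((2 * r : ℕ) : ℂ) * evec n (x i0) := by
        intro i hi
        rw [Finset.mem_sdiff, Finset.mem_singleton] at hi
        have hne : i0 ≠ i := fun h => hi.2 h.symm
        rw [Finset.sum_congr rfl fun c _ => congrArg (evec n) (Function.update_of_ne hne c x),
          Finset.sum_const, hcard i, nsmul_eq_mul]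
      rw [Finset.sum_congr rfl h1, Finset.sum_const, nsmul_eq_mul,
        Finset.card_sdiff_of_subset (Finset.singleton_subset_iff.mpr (Finset.mem_univ i0)),
        Finset.card_singleton, Finset.card_univ, Fintype.card_fin, Nat.cast_mul, Nat.cast_mul]
      push_cast
      ring
    · have h2 : ∀ c, Function.update x i0 c i0 = c := fun c => Function.update_self i0 c x
      rw [Finset.sum_congr rfl fun c _ => congrArg (evec n) (h2 c),
        cycle_sum n r hrn (x i0) (evec n), Finset.mul_sum]
      refine Finset.sum_congr rfl fun s hs => ?_
      rw [Finset.mem_Icc] at hs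
      rw [show x i0 - (s : ZMod n) = x i0 + (-(s : ZMod n)) by ring, evec_add, evec_add,
        ← mul_add, evec_add_neg, ZMod.val_cast_of_lt (show s < n by omega)]
  rw [hbig, hlam]
  push_cast [Nat.cast_sub hm]
  ring

/-- For `m, r ≥ 1` and `k : Fin m → ℕ` with `2r+1 ≤ k i`: in the `m`-dimensional `r`-nearest
neighbor torus, the vector `v(x) = exp(2πix₁/k₁)` is an eigenvector of the Laplacian with
eigenvalue `2r + 1 - sin((2r+1)π/k₁)/sin(π/k₁)`; in particular this eigenvalue does not
depend on the dimension `m`. -/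
theorem multitorus_algebraic_connectivity_eigenvector (m r : ℕ) (hm : 1 ≤ m) (hr : 1 ≤ r)
    (k : Fin m → ℕ) (hk : ∀ i, 2 * r + 1 ≤ k i) :
    haveI : ∀ i, NeZero (k i) := fun i => ⟨by have := hk i; omega⟩
    (nnTorus m r k).lapMatrix ℂ *ᵥ
        (fun x => Complex.exp (2 * Real.pi * Complex.I * (x ⟨0, hm⟩).val / k ⟨0, hm⟩)) =
      ((2 * r + 1 - Real.sin ((2 * r + 1) * Real.pi / k ⟨0, hm⟩) /
          Real.sin (Real.pi / k ⟨0, hm⟩) : ℝ) : ℂ) •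
        (fun x => Complex.exp (2 * Real.pi * Complex.I * (x ⟨0, hm⟩).val / k ⟨0, hm⟩)) := by
  haveI : ∀ i, NeZero (k i) := fun i => ⟨by have := hk i; omega⟩
  exact main_aux m r hm hr k hk
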